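/- In a pre-triangulated category satisfying the octahedral axiom in the form (TR4''), the strong form of the octahedral axiom (TR4) holds: any octahedral diagram built from composable morphisms f : X → Y and u : Y → Y' can be completed so that the triangle Y --⟨-g, u⟩--> Z ⊕ Y' --(u', g')--> Z' --δ--> Y[1] is exact, where δ = f[1] ∘ h' = w ∘ v'. -/

import Mathlib

/-!
STATEMENT 14: In a pre-triangulated category satisfying the octahedral axiom in the form
(TR4''), the strong form of the octahedral axiom (TR4) holds: given exact triangles on
`f : X ⟶ Y`, on `f ≫ u : X ⟶ Y'` and on `u : Y ⟶ Y'`, the octahedral diagram can be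
completed by `u' : Z ⟶ Z'` and `v' : Z' ⟶ W` such that all squares commute,
`v' ≫ w = δ = h' ≫ f⟦1⟧`, the third column `Z --u'--> Z' --v'--> W --w ≫ g⟦1⟧--> Z⟦1⟧`
is exact, and moreover the triangle `Y --⟨-g,u⟩--> Z ⊞ Y' --(u',g')--> Z' --δ--> Y⟦1⟧`
is exact.
-/

open CategoryTheory Category Limits Pretriangulated

open Preadditive in
lemma contractible_summand_distinguished
    {C : Type*} [Category C] [Preadditive C] [HasZeroObject C] [HasShift C ℤ]
    [∀ n : ℤ, (shiftFunctor C n).Additive] [Pretriangulated C] [HasBinaryBiproducts C]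
    {Z Z' W A : C} (f : Z ⟶ Z') (p : Z' ⟶ W) (q : W ⟶ Z⟦(1 : ℤ)⟧)
    (hS : Triangle.mk (biprod.map f (𝟙 A)) (biprod.desc p 0)
      (q ≫ (shiftFunctor C (1 : ℤ)).map (biprod.inl : Z ⟶ Z ⊞ A)) ∈ distTriang C) :
    Triangle.mk f p q ∈ distTriang C := by
  have hmono : Mono ((shiftFunctor C (1 : ℤ)).map (biprod.inl : Z ⟶ Z ⊞ A)) := by
    have : IsSplitMono ((shiftFunctor C (1 : ℤ)).map (biprod.inl : Z ⟶ Z ⊞ A)) :=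
      IsSplitMono.mk' (SplitMono.mk ((shiftFunctor C (1 : ℤ)).map (biprod.fst : Z ⊞ A ⟶ Z))
        (by rw [← Functor.map_comp, biprod.inl_fst, CategoryTheory.Functor.map_id]))
    infer_instance
  obtain ⟨Q, a, b, hQ⟩ := distinguished_cocone_triangle f
  obtain ⟨m, hm₁, hm₂⟩ : ∃ m : Q ⟶ W, a ≫ m = (biprod.inl : Z' ⟶ Z' ⊞ A) ≫ biprod.desc p 0 ∧
      b ≫ (shiftFunctor C (1 : ℤ)).map (biprod.inl : Z ⟶ Z ⊞ A) =
        m ≫ q ≫ (shiftFunctor C (1 : ℤ)).map (biprod.inl : Z ⟶ Z ⊞ A) :=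
    complete_distinguished_triangle_morphism
    (Triangle.mk f a b) _ hQ hS (biprod.inl) (biprod.inl) (by exact (biprod.inl_map f (𝟙 A)).symm)
  rw [biprod.inl_desc] at hm₁
  have hb : b = m ≫ q := by
    rw [← cancel_mono ((shiftFunctor C (1 : ℤ)).map (biprod.inl : Z ⟶ Z ⊞ A))]
    simpa using hm₂
  have : IsIso m := by
    refine isIso_of_yoneda_map_bijective _ (fun A' => ⟨?_, ?_⟩)
    · intro x y hxy
      dsimp at x y hxy
      have hd : (x - y) ≫ m = 0 := by rw [sub_comp, hxy, sub_self]
      have hd₂ : (x - y) ≫ b = 0 := by rw [hb, ← assoc, hd, zero_comp]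
      obtain ⟨y₂, hy₂⟩ : ∃ y₂ : A' ⟶ Z', x - y = y₂ ≫ a := Triangle.coyoneda_exact₃ _ hQ (x - y) hd₂
      have hy₂p : (y₂ ≫ biprod.inl) ≫ (biprod.desc p 0 : Z' ⊞ A ⟶ W) = 0 := by
        have : y₂ ≫ p = 0 := by
          rw [← hm₁, ← assoc, ← hy₂, hd]
        simpa using this
      obtain ⟨z, hz⟩ : ∃ z : A' ⟶ Z ⊞ A, y₂ ≫ biprod.inl = z ≫ biprod.map f (𝟙 A) :=
        Triangle.coyoneda_exact₂ _ hS (y₂ ≫ biprod.inl) hy₂p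
      have hy₂' : y₂ = z ≫ biprod.fst ≫ f := by
        have := hz =≫ (biprod.fst : Z' ⊞ A ⟶ Z')
        simpa using this
      rw [← sub_eq_zero]
      have hfa : f ≫ a = 0 := comp_distTriang_mor_zero₁₂ _ hQ
      rw [hy₂, hy₂', assoc, assoc, hfa, comp_zero, comp_zero]
    · intro t
      have hqf : q ≫ (shiftFunctor C (1 : ℤ)).map f = 0 := by
        rw [← cancel_mono ((shiftFunctor C (1 : ℤ)).map (biprod.inl : Z' ⟶ Z' ⊞ A))]
        have h31 : (q ≫ (shiftFunctor C (1 : ℤ)).map (biprod.inl : Z ⟶ Z ⊞ A)) ≫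
            (shiftFunctor C (1 : ℤ)).map (biprod.map f (𝟙 A)) = 0 := comp_distTriang_mor_zero₃₁ _ hS
        rw [assoc, ← Functor.map_comp, biprod.inl_map] at h31
        rw [zero_comp, assoc, ← Functor.map_comp]
        simpa [Functor.map_comp] using h31
      have hbf : b ≫ (shiftFunctor C (1 : ℤ)).map f = 0 := by
        rw [hb, assoc, hqf, comp_zero]
      obtain ⟨a', ha'⟩ : ∃ a' : A' ⟶ Q, t ≫ q = a' ≫ b := Triangle.coyoneda_exact₁ _ hQ (t ≫ q)
        (by exact (by rw [assoc, hqf, comp_zero] : (t ≫ q) ≫ (shiftFunctor C (1 : ℤ)).map f = 0))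
      have hd : (t - a' ≫ m) ≫ q = 0 := by
        rw [sub_comp, assoc, ← hb, ← ha', sub_self]
      obtain ⟨e, he⟩ : ∃ e : A' ⟶ Z' ⊞ A, t - a' ≫ m = e ≫ biprod.desc p 0 :=
        Triangle.coyoneda_exact₃ _ hS (t - a' ≫ m)
        (by exact (by rw [← assoc, hd, zero_comp] :
          (t - a' ≫ m) ≫ q ≫ (shiftFunctor C (1 : ℤ)).map (biprod.inl : Z ⟶ Z ⊞ A) = 0))
      have hdesc : (biprod.desc p 0 : Z' ⊞ A ⟶ W) = biprod.fst ≫ p := by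
        ext <;> simp
      have he' : t - a' ≫ m = (e ≫ biprod.fst ≫ a) ≫ m := by
        rw [he, hdesc, ← hm₁]
        simp only [assoc]
      refine ⟨a' + e ≫ biprod.fst ≫ a, ?_⟩
      dsimp
      rw [add_comp, ← he']
      abel
  refine isomorphic_distinguished _ hQ _ ?_
  exact Triangle.isoMk _ _ (Iso.refl _) (Iso.refl _) ((asIso m).symm)
    (by exact (comp_id f).trans (id_comp f).symm)
    (by dsimp; change p ≫ inv m = 𝟙 Z' ≫ a; rw [← cancel_mono m]; simp [hm₁])
    (by dsimp; change q ≫ (shiftFunctor C (1 : ℤ)).map (𝟙 Z) = inv m ≫ b; simp [hb])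


theorem TR4''_implies_strong_TR4
    {C : Type*} [Category C] [Preadditive C] [HasZeroObject C] [HasShift C ℤ]
    [∀ n : ℤ, (shiftFunctor C n).Additive] [Pretriangulated C] [HasBinaryBiproducts C]
    -- the axiom (TR4'')
    (hTR4'' : ∀ {X Y Z Y' Z' : C} (f : X ⟶ Y) (g : Y ⟶ Z) (h : Z ⟶ X⟦(1 : ℤ)⟧)
      (f' : X ⟶ Y') (g' : Y' ⟶ Z') (h' : Z' ⟶ X⟦(1 : ℤ)⟧) (u : Y ⟶ Y'),
      (Triangle.mk f g h ∈ distTriang C) → (Triangle.mk f' g' h' ∈ distTriang C) →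
      f ≫ u = f' →
      ∃ u' : Z ⟶ Z', g ≫ u' = u ≫ g' ∧ u' ≫ h' = h ∧
        Triangle.mk (biprod.lift (-g) u) (biprod.desc u' g')
          (h' ≫ (shiftFunctor C (1 : ℤ)).map f) ∈ distTriang C) :
    -- the strong form of (TR4)
    ∀ {X Y Y' Z Z' W : C} (f : X ⟶ Y) (u : Y ⟶ Y')
      (g : Y ⟶ Z) (h : Z ⟶ X⟦(1 : ℤ)⟧) (g' : Y' ⟶ Z') (h' : Z' ⟶ X⟦(1 : ℤ)⟧)
      (v : Y' ⟶ W) (w : W ⟶ Y⟦(1 : ℤ)⟧),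
      (Triangle.mk f g h ∈ distTriang C) →
      (Triangle.mk (f ≫ u) g' h' ∈ distTriang C) →
      (Triangle.mk u v w ∈ distTriang C) →
      ∃ (u' : Z ⟶ Z') (v' : Z' ⟶ W),
        g ≫ u' = u ≫ g' ∧ u' ≫ h' = h ∧ g' ≫ v' = v ∧
        v' ≫ w = h' ≫ (shiftFunctor C (1 : ℤ)).map f ∧
        (Triangle.mk u' v' (w ≫ (shiftFunctor C (1 : ℤ)).map g) ∈ distTriang C) ∧
        (Triangle.mk (biprod.lift (-g) u) (biprod.desc u' g')
          (h' ≫ (shiftFunctor C (1 : ℤ)).map f) ∈ distTriang C) := by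
  intro X Y Y' Z Z' W f u g h g' h' v w hfgh hfug huvw
  obtain ⟨u', hu'1, hu'2, hT1⟩ := hTR4'' f g h (f ≫ u) g' h' u hfgh hfug rfl
  obtain ⟨v', hv'1, hv'2, hTbig⟩ := hTR4'' (biprod.lift (-g) u) (biprod.desc u' g')
    (h' ≫ (shiftFunctor C (1 : ℤ)).map f) u v w biprod.snd hT1 huvw (by simp)
  have hg'v' : g' ≫ v' = v := by
    have := biprod.inr ≫= hv'1
    simpa using this
  have hwu : w ≫ (shiftFunctor C (1 : ℤ)).map u = 0 := comp_distTriang_mor_zero₃₁ _ huvw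
  refine ⟨u', v', hu'1, hu'2, hg'v', hv'2, ?_, hT1⟩
  apply contractible_summand_distinguished u' v' (w ≫ (shiftFunctor C (1 : ℤ)).map g)
    (A := Y')
  refine isomorphic_distinguished _ hTbig _ ?_
  have hlm : biprod.lift (-g) u ≫ biprod.map (-𝟙 Z) (𝟙 Y') = biprod.lift g u := by
    ext <;> simp
  refine (Triangle.isoMk _ _
    (Iso.mk (biprod.map (-𝟙 Z) (𝟙 Y')) (biprod.map (-𝟙 Z) (𝟙 Y'))
      (by ext <;> simp) (by ext <;> simp) : Z ⊞ Y' ≅ Z ⊞ Y')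
    (Iso.mk (𝟙 _ + biprod.snd ≫ g' ≫ biprod.inl) (𝟙 _ - biprod.snd ≫ g' ≫ biprod.inl)
      (by simp [Preadditive.comp_sub, Preadditive.add_comp, biprod.inl_snd_assoc])
      (by simp [Preadditive.comp_add, Preadditive.sub_comp]) : Z' ⊞ Y' ≅ Z' ⊞ Y')
    (Iso.refl W) ?_ ?_ ?_).symm
  · dsimp
    change (biprod.lift (-biprod.desc u' g') biprod.snd : Z ⊞ Y' ⟶ Z' ⊞ Y') ≫
      (𝟙 (Z' ⊞ Y') + biprod.snd ≫ g' ≫ biprod.inl) = biprod.map (-𝟙 Z) (𝟙 Y') ≫ biprod.map u' (𝟙 Y')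
    ext <;> simp [Preadditive.comp_add, Preadditive.add_comp, Preadditive.comp_neg,
      Preadditive.neg_comp]
  · dsimp
    change (biprod.desc v' v : Z' ⊞ Y' ⟶ W) ≫ 𝟙 W =
      (𝟙 (Z' ⊞ Y') + biprod.snd ≫ g' ≫ biprod.inl) ≫ biprod.desc v' 0
    ext <;> simp [Preadditive.comp_add, Preadditive.add_comp, Preadditive.comp_neg,
      Preadditive.neg_comp, hg'v']
  · dsimp
    change (w ≫ (shiftFunctor C (1 : ℤ)).map (biprod.lift (-g) u)) ≫
      (shiftFunctor C (1 : ℤ)).map (biprod.map (-𝟙 Z) (𝟙 Y')) = 𝟙 W ≫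
      (w ≫ (shiftFunctor C (1 : ℤ)).map g) ≫ (shiftFunctor C (1 : ℤ)).map (biprod.inl : Z ⟶ Z ⊞ Y')
    rw [id_comp, assoc, ← Functor.map_comp, hlm, biprod.lift_eq, Functor.map_add,
      Preadditive.comp_add, Functor.map_comp, Functor.map_comp, ← Category.assoc w,
      ← Category.assoc w, hwu, zero_comp, add_zero]
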